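/- Define f : ℝ² → ℝ by f(x) = ln(1 − ln|x|) for 0 < |x| ≤ 1 and f(x) = 0 for |x| > 1 (and, say, f(0) = 0). Then f is not essentially bounded on ℝ², yet ‖f‖_LBMO < ∞. In particular the inclusion L^∞(ℝ²) ⊂ LBMO is strict. -/

import Mathlib

open MeasureTheory Metric Real
open scoped ENNReal

noncomputable section

abbrev E2 := EuclideanSpace ℝ (Fin 2)

/-- Average of `f` over the ball `B(c,r)`. -/
def avg (f : E2 → ℝ) (c : E2) (r : ℝ) : ℝ := ⨍ x in ball c r, f x

/-- The BMO seminorm, as a supremum in `[0,∞]`. -/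
def bmoNorm (f : E2 → ℝ) : ℝ≥0∞ :=
  ⨆ (c : E2) (r : ℝ) (_ : 0 < r), ENNReal.ofReal (⨍ x in ball c r, |f x - avg f c r|)

/-- The second part of the LBMO norm: supremum over pairs of balls `B₁ = B(x₁,r₁)`,
`B₂ = B(x₂,r₂)` with `0 < r₁ ≤ 1` and `2B₂ ⊆ B₁`. -/
def lbmoSup (f : E2 → ℝ) : ℝ≥0∞ :=
  ⨆ (x₁ : E2) (x₂ : E2) (r₁ : ℝ) (r₂ : ℝ) (_ : 0 < r₂) (_ : 0 < r₁) (_ : r₁ ≤ 1)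
    (_ : ball x₂ (2 * r₂) ⊆ ball x₁ r₁),
    ENNReal.ofReal (|avg f x₂ r₂ - avg f x₁ r₁| /
      (1 + Real.log ((1 - Real.log r₂) / (1 - Real.log r₁))))

/-- The LBMO norm. -/
def lbmoNorm (f : E2 → ℝ) : ℝ≥0∞ := bmoNorm f + lbmoSup f

-- The unbounded function `f(x) = ln(1 - ln |x|)` for `0 < |x| ≤ 1`, `f(x) = 0` otherwise.
open Classical in
def fLog : E2 → ℝ :=
  fun x => if ‖x‖ ≤ 1 ∧ x ≠ 0 then Real.log (1 - Real.log ‖x‖) else 0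

def gg (t : ℝ) : ℝ := if t ≤ 1 then Real.log (1 - Real.log t) else 0

lemma gg_nonneg {t : ℝ} (ht : 0 ≤ t) : 0 ≤ gg t := by
  unfold gg
  split_ifs with h
  · exact Real.log_nonneg (by nlinarith [Real.log_nonpos ht h])
  · exact le_refl _

lemma one_sub_log_pos {t : ℝ} (ht : 0 < t) (h1 : t ≤ 1) : 0 < 1 - Real.log t := by
  nlinarith [Real.log_nonpos ht.le h1]

lemma gg_anti {s t : ℝ} (hs : 0 < s) (hst : s ≤ t) : gg t ≤ gg s := by
  unfold gg
  have hts : 0 < t := lt_of_lt_of_le hs hst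
  split_ifs with h1 h2 h2
  · have : Real.log s ≤ Real.log t := Real.log_le_log hs hst
    exact Real.log_le_log (one_sub_log_pos hts h1) (by linarith)
  · exact absurd (hst.trans h1) h2
  · exact Real.log_nonneg (by nlinarith [Real.log_nonpos hs.le h2])
  · exact le_refl _

lemma gg_sub_le {s t : ℝ} (hs : 0 < s) (hst : s ≤ t) : gg s - gg t ≤ Real.log (t / s) := by
  have hts : 0 < t := lt_of_lt_of_le hs hst
  unfold gg
  split_ifs with h1 h2 h2
  · set a := 1 - Real.log s with ha
    set b := 1 - Real.log t with hb
    have hbpos : 0 < b := one_sub_log_pos hts h2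
    have hb1 : 1 ≤ b := by
      have := Real.log_nonpos hts.le h2; simp only [hb]; linarith
    have hab : b ≤ a := by
      have := Real.log_le_log hs hst; simp only [ha, hb]; linarith
    have hapos : 0 < a := lt_of_lt_of_le hbpos hab
    have h1' : Real.log a - Real.log b = Real.log (a / b) := (Real.log_div hapos.ne' hbpos.ne').symm
    rw [h1']
    have h2' : Real.log (a / b) ≤ a / b - 1 := Real.log_le_sub_one_of_pos (by positivity)
    have h3' : a / b - 1 = (a - b) / b := by field_simp
    have h4' : (a - b) / b ≤ a - b := by
      rw [div_le_iff₀ hbpos]; nlinarith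
    have h5' : a - b = Real.log t - Real.log s := by simp only [ha, hb]; ring
    have hlog : Real.log t - Real.log s = Real.log (t / s) := (Real.log_div hts.ne' hs.ne').symm
    linarith
  · -- s ≤ 1 < t
    rw [sub_zero]
    have hu : 1 - Real.log s ≤ 1 / s := by
      have := Real.add_one_le_exp (Real.log (1 / s))
      rw [Real.exp_log (by positivity), Real.log_div one_ne_zero hs.ne'] at this
      simp only [Real.log_one] at this; linarith
    have h6 : Real.log (1 - Real.log s) ≤ Real.log (1 / s) :=
      Real.log_le_log (one_sub_log_pos hs h1) hu
    have h7 : Real.log (1 / s) ≤ Real.log (t / s) := by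
      apply Real.log_le_log (by positivity)
      gcongr <;> linarith
    linarith
  · exact absurd (hst.trans h2) h1
  · rw [sub_zero]
    exact Real.log_nonneg ((one_le_div hs).mpr hst)


lemma fLog_eq (x : E2) : fLog x = gg ‖x‖ := by
  unfold fLog gg
  by_cases hx : x = 0
  · simp [hx]
  · by_cases h1 : ‖x‖ ≤ 1
    · rw [if_pos ⟨h1, hx⟩, if_pos h1]
    · rw [if_neg (by tauto), if_neg h1]

lemma meas_fLog : Measurable fLog := by
  unfold fLog
  apply Measurable.ite
  · have : {x : E2 | ‖x‖ ≤ 1 ∧ x ≠ 0} = (Metric.closedBall (0:E2) 1) ∩ ({0}ᶜ) := by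
      ext x; simp [Metric.mem_closedBall, dist_zero_right]
    rw [this]
    exact (measurableSet_closedBall).inter (measurableSet_singleton 0).compl
  · exact Real.measurable_log.comp (measurable_const.sub (Real.measurable_log.comp measurable_norm))
  · exact measurable_const

lemma vol_ball_E2 (c : E2) {r : ℝ} (hr : 0 ≤ r) :
    volume (ball c r) = ENNReal.ofReal (r^2) * volume (ball (0:E2) 1) := by
  rw [Measure.addHaar_ball volume c hr]; simp [finrank_euclideanSpace]

lemma keyL {R : ℝ} (hR : 0 < R) :
    ∫⁻ x in ball (0:E2) R, ENNReal.ofReal (Real.log (R / ‖x‖)) ∂volume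
      ≤ volume (ball (0:E2) R) := by
  have hmf : Measurable fun x : E2 => Real.log (R / ‖x‖) :=
    Real.measurable_log.comp (measurable_const.div measurable_norm)
  have hnn : 0 ≤ᵐ[volume.restrict (ball (0:E2) R)] fun x : E2 => Real.log (R / ‖x‖) := by
    filter_upwards [ae_restrict_mem measurableSet_ball] with x hx
    by_cases hx0 : x = 0
    · simp [hx0]
    · have h1 : ‖x‖ > 0 := norm_pos_iff.mpr hx0
      have h2 : ‖x‖ < R := by simpa [dist_zero_right] using hx
      exact Real.log_nonneg ((one_le_div h1).mpr h2.le)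
  rw [lintegral_eq_lintegral_meas_lt _ hnn hmf.aemeasurable]
  have step : ∀ t ∈ Set.Ioi (0:ℝ),
      (volume.restrict (ball (0:E2) R)) {a : E2 | t < Real.log (R / ‖a‖)}
        ≤ ENNReal.ofReal (Real.exp (-t)) * volume (ball (0:E2) R) := by
    intro t ht
    have ht0 : (0:ℝ) < t := ht
    rw [Measure.restrict_apply (measurableSet_lt measurable_const hmf)]
    have hsub : {a : E2 | t < Real.log (R / ‖a‖)} ∩ ball (0:E2) R
        ⊆ ball (0:E2) (Real.exp (-t) * R) := by
      rintro a ⟨ha, -⟩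
      simp only [Set.mem_setOf_eq] at ha
      have ha0 : a ≠ 0 := by
        rintro rfl
        simp at ha; linarith
      have hna : 0 < ‖a‖ := norm_pos_iff.mpr ha0
      have hdiv : 0 < R / ‖a‖ := by positivity
      have hexp : Real.exp t < R / ‖a‖ := (Real.lt_log_iff_exp_lt hdiv).mp ha
      have : ‖a‖ * Real.exp t < R := by
        rw [lt_div_iff₀ hna] at hexp; linarith [hexp]
      have : ‖a‖ < Real.exp (-t) * R := by
        rw [Real.exp_neg]
        rw [lt_div_iff₀ hna] at hexp
        calc ‖a‖ = (‖a‖ * Real.exp t) * (Real.exp t)⁻¹ := by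
              field_simp
          _ < R * (Real.exp t)⁻¹ := by
              apply mul_lt_mul_of_pos_right ?_ (by positivity)
              linarith
          _ = (Real.exp t)⁻¹ * R := by ring
      simpa [mem_ball, dist_zero_right] using this
    calc volume ({a : E2 | t < Real.log (R / ‖a‖)} ∩ ball (0:E2) R)
        ≤ volume (ball (0:E2) (Real.exp (-t) * R)) := measure_mono hsub
      _ = ENNReal.ofReal ((Real.exp (-t) * R)^2) * volume (ball (0:E2) 1) :=
          vol_ball_E2 _ (by positivity)
      _ ≤ ENNReal.ofReal (Real.exp (-t) * R^2) * volume (ball (0:E2) 1) := by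
          apply mul_le_mul_left
          apply ENNReal.ofReal_le_ofReal
          have he : Real.exp (-t) ≤ 1 := Real.exp_le_one_iff.mpr (by linarith)
          have he0 : 0 < Real.exp (-t) := Real.exp_pos _
          nlinarith [sq_nonneg R]
      _ = ENNReal.ofReal (Real.exp (-t)) * (ENNReal.ofReal (R^2) * volume (ball (0:E2) 1)) := by
          rw [ENNReal.ofReal_mul (Real.exp_pos _).le, mul_assoc]
      _ = ENNReal.ofReal (Real.exp (-t)) * volume (ball (0:E2) R) := by
          rw [vol_ball_E2 _ hR.le]
  calc ∫⁻ t in Set.Ioi (0:ℝ), (volume.restrict (ball (0:E2) R)) {a : E2 | t < Real.log (R / ‖a‖)}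
      ≤ ∫⁻ t in Set.Ioi (0:ℝ), ENNReal.ofReal (Real.exp (-t)) * volume (ball (0:E2) R) := by
        apply setLIntegral_mono' measurableSet_Ioi step
    _ = (∫⁻ t in Set.Ioi (0:ℝ), ENNReal.ofReal (Real.exp (-t))) * volume (ball (0:E2) R) := by
        rw [lintegral_mul_const]
        exact (Real.measurable_exp.comp measurable_neg).ennreal_ofReal
    _ = ENNReal.ofReal 1 * volume (ball (0:E2) R) := by
        congr 1
        rw [← MeasureTheory.ofReal_integral_eq_lintegral_ofReal]
        · rw [integral_exp_neg_Ioi_zero]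
        · exact (by simpa using exp_neg_integrableOn_Ioi 0 one_pos :
            IntegrableOn (fun x : ℝ => Real.exp (-x)) (Set.Ioi 0) volume)
        · filter_upwards with t using (Real.exp_pos _).le
    _ = volume (ball (0:E2) R) := by simp


lemma ae_ne_zero : ∀ᵐ x : E2 ∂volume, x ≠ 0 := by
  have : volume ({0} : Set E2) = 0 := measure_singleton 0
  rw [ae_iff]
  convert this using 2
  ext x; simp

lemma hmf' {R : ℝ} : Measurable fun x : E2 => Real.log (R / ‖x‖) :=
  Real.measurable_log.comp (measurable_const.div measurable_norm)

lemma hnnR {R : ℝ} (hR : 0 < R) :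
    0 ≤ᵐ[volume.restrict (ball (0:E2) R)] fun x : E2 => Real.log (R / ‖x‖) := by
  filter_upwards [ae_restrict_mem measurableSet_ball] with x hx
  by_cases hx0 : x = 0
  · simp [hx0]
  · have h1 : ‖x‖ > 0 := norm_pos_iff.mpr hx0
    have h2 : ‖x‖ < R := by simpa [dist_zero_right] using hx
    exact Real.log_nonneg ((one_le_div h1).mpr h2.le)

lemma intLog {R : ℝ} (hR : 0 < R) :
    IntegrableOn (fun x : E2 => Real.log (R / ‖x‖)) (ball (0:E2) R) volume := by
  refine ⟨hmf'.aestronglyMeasurable, ?_⟩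
  rw [hasFiniteIntegral_iff_norm]
  have : ∫⁻ x in ball (0:E2) R, ENNReal.ofReal ‖Real.log (R / ‖x‖)‖ ∂volume
      = ∫⁻ x in ball (0:E2) R, ENNReal.ofReal (Real.log (R / ‖x‖)) ∂volume := by
    apply lintegral_congr_ae
    filter_upwards [hnnR hR] with x hx
    rw [Real.norm_eq_abs, abs_of_nonneg hx]
  rw [this]
  exact lt_of_le_of_lt (keyL hR) measure_ball_lt_top

lemma ae_bound {R : ℝ} (hR : 0 < R) :
    ∀ᵐ x ∂(volume.restrict (ball (0:E2) R)), ‖fLog x - gg R‖ ≤ Real.log (R / ‖x‖) := by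
  filter_upwards [ae_restrict_mem measurableSet_ball, ae_restrict_of_ae ae_ne_zero] with x hx hx0
  have h1 : 0 < ‖x‖ := norm_pos_iff.mpr hx0
  have h2 : ‖x‖ < R := by simpa [dist_zero_right] using hx
  have h3 : gg R ≤ gg ‖x‖ := gg_anti h1 h2.le
  have h4 : gg ‖x‖ - gg R ≤ Real.log (R / ‖x‖) := gg_sub_le h1 h2.le
  rw [fLog_eq, Real.norm_eq_abs, abs_of_nonneg (by linarith)]
  exact h4

lemma int_sub {R : ℝ} (hR : 0 < R) :
    IntegrableOn (fun x => fLog x - gg R) (ball (0:E2) R) volume :=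
  Integrable.mono' (intLog hR)
    ((meas_fLog.sub measurable_const).aestronglyMeasurable) (ae_bound hR)

lemma int_fLog_ball0 {R : ℝ} (hR : 0 < R) : IntegrableOn fLog (ball (0:E2) R) volume := by
  have h1 := (int_sub hR).add ((integrableOn_const (C := gg R) measure_ball_lt_top.ne))
  have he : ((fun x => fLog x - gg R) + fun _ => gg R) = fLog := by funext x; simp
  rwa [he] at h1

lemma int_fLog (c : E2) (r : ℝ) : IntegrableOn fLog (ball c r) volume := by
  have hsub : ball c r ⊆ ball (0:E2) (‖c‖ + |r| + 1) := by
    intro x hx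
    rw [mem_ball, dist_zero_right]
    have : dist x c < r := hx
    have h2 : ‖x‖ ≤ dist x c + ‖c‖ := by
      rw [dist_eq_norm]
      calc ‖x‖ = ‖(x - c) + c‖ := by rw [sub_add_cancel]
        _ ≤ ‖x - c‖ + ‖c‖ := norm_add_le _ _
    have : r ≤ |r| := le_abs_self r
    linarith
  exact (int_fLog_ball0 (by positivity)).mono_set hsub

lemma int_est {R : ℝ} (hR : 0 < R) :
    ∫ x in ball (0:E2) R, |fLog x - gg R| ∂volume ≤ (volume (ball (0:E2) R)).toReal := by
  have h1 : ∫ x in ball (0:E2) R, |fLog x - gg R| ∂volume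
      ≤ ∫ x in ball (0:E2) R, Real.log (R / ‖x‖) ∂volume := by
    apply integral_mono_ae (int_sub hR).abs (intLog hR)
    filter_upwards [ae_bound hR] with x hx
    rwa [Real.norm_eq_abs] at hx
  have h2 : ∫ x in ball (0:E2) R, Real.log (R / ‖x‖) ∂volume
      = (∫⁻ x in ball (0:E2) R, ENNReal.ofReal (Real.log (R / ‖x‖)) ∂volume).toReal := by
    rw [integral_eq_lintegral_of_nonneg_ae (hnnR hR) hmf'.aestronglyMeasurable]
  have h3 := ENNReal.toReal_mono measure_ball_lt_top.ne (keyL hR)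
  linarith


lemma Vpos (c : E2) {r : ℝ} (hr : 0 < r) : 0 < (volume (ball c r)).toReal :=
  ENNReal.toReal_pos (measure_ball_pos volume c hr).ne' measure_ball_lt_top.ne

lemma vol_ratio {c : E2} {r : ℝ} (hr : 0 < r) :
    (volume (ball (0:E2) (3*r))).toReal = 9 * (volume (ball c r)).toReal := by
  rw [vol_ball_E2 (0:E2) (by positivity : (0:ℝ) ≤ 3*r), vol_ball_E2 c hr.le]
  rw [ENNReal.toReal_mul, ENNReal.toReal_mul, ENNReal.toReal_ofReal (by positivity),
    ENNReal.toReal_ofReal (by positivity)]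
  ring

lemma avg_sub (c : E2) {r : ℝ} (a : ℝ) (hr : 0 < r) :
    avg fLog c r - a
      = (volume (ball c r)).toReal⁻¹ * ∫ x in ball c r, (fLog x - a) ∂volume := by
  set V := (volume (ball c r)).toReal with hV
  have hVpos : 0 < V := Vpos c hr
  rw [avg, setAverage_eq, smul_eq_mul, integral_sub (int_fLog c r)
    ((integrableOn_const (C := a) measure_ball_lt_top.ne)), setIntegral_const,
    smul_eq_mul, measureReal_def, ← hV]
  field_simp

lemma abs_avg_sub_le {c : E2} {r a M : ℝ} (hr : 0 < r)
    (h : ∫ x in ball c r, |fLog x - a| ∂volume ≤ M * (volume (ball c r)).toReal) :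
    |avg fLog c r - a| ≤ M := by
  set V := (volume (ball c r)).toReal with hV
  have hVpos : 0 < V := Vpos c hr
  rw [avg_sub c a hr, abs_mul, abs_of_nonneg (by positivity : (0:ℝ) ≤ V⁻¹)]
  have h2 : |∫ x in ball c r, (fLog x - a) ∂volume| ≤ ∫ x in ball c r, |fLog x - a| ∂volume := by
    simpa [Real.norm_eq_abs] using
      norm_integral_le_integral_norm (μ := volume.restrict (ball c r)) (fun x => fLog x - a)
  have hM : 0 ≤ M := by
    have := (integral_nonneg (fun x => abs_nonneg _) : (0:ℝ) ≤ ∫ x in ball c r, |fLog x - a| ∂volume)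
    nlinarith
  calc V⁻¹ * |∫ x in ball c r, (fLog x - a) ∂volume| ≤ V⁻¹ * (M * V) := by
        apply mul_le_mul_of_nonneg_left (le_trans h2 h) (by positivity)
    _ = M := by field_simp


lemma log_three_le_two : Real.log 3 ≤ 2 := by
  have := Real.log_le_sub_one_of_pos (by norm_num : (0:ℝ) < 3)
  linarith

lemma norm_bounds {c x : E2} {r : ℝ} (hx : x ∈ ball c r) :
    ‖c‖ - r < ‖x‖ ∧ ‖x‖ < ‖c‖ + r := by
  have hd : ‖x - c‖ < r := by rwa [mem_ball, dist_eq_norm] at hx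
  have habs : |‖x‖ - ‖c‖| ≤ ‖x - c‖ := abs_norm_sub_norm_le _ _
  rw [abs_le] at habs
  obtain ⟨h1, h2⟩ := habs
  constructor <;> linarith

lemma est_case (c : E2) {r : ℝ} (hr : 0 < r) :
    ∃ a : ℝ, |a - gg (max ‖c‖ r)| ≤ 2 ∧
      ∫ x in ball c r, |fLog x - a| ∂volume ≤ 9 * (volume (ball c r)).toReal := by
  by_cases hc : 2*r ≤ ‖c‖
  · refine ⟨gg ‖c‖, ?_, ?_⟩
    · rw [max_eq_left (by linarith)]; simp
    · have hpt : ∀ x ∈ ball c r, |fLog x - gg ‖c‖| ≤ 2 := by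
        intro x hx
        obtain ⟨hl, hu⟩ := norm_bounds hx
        have hs1 : 0 < ‖c‖ - r := by linarith
        have hx0 : 0 < ‖x‖ := by linarith
        have A1 : gg ‖x‖ ≤ gg (‖c‖ - r) := gg_anti hs1 (by linarith)
        have A2 : gg (‖c‖ + r) ≤ gg ‖x‖ := gg_anti hx0 (by linarith)
        have B1 : gg ‖c‖ ≤ gg (‖c‖ - r) := gg_anti hs1 (by linarith)
        have B2 : gg (‖c‖ + r) ≤ gg ‖c‖ := gg_anti (by linarith) (by linarith)
        have hdiff : gg (‖c‖ - r) - gg (‖c‖ + r) ≤ Real.log ((‖c‖ + r)/(‖c‖ - r)) :=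
          gg_sub_le hs1 (by linarith)
        have hlog : Real.log ((‖c‖ + r)/(‖c‖ - r)) ≤ Real.log 3 := by
          apply Real.log_le_log (by positivity)
          rw [div_le_iff₀ hs1]; linarith
        rw [fLog_eq]
        have := log_three_le_two
        rw [abs_le]; constructor <;> linarith
      calc ∫ x in ball c r, |fLog x - gg ‖c‖| ∂volume
          ≤ ∫ _x in ball c r, (2:ℝ) ∂volume := by
            apply setIntegral_mono_on
              ((int_fLog c r).sub ((integrableOn_const (C := gg ‖c‖)
                measure_ball_lt_top.ne))).abs
              ((integrableOn_const (C := (2:ℝ)) measure_ball_lt_top.ne))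
              measurableSet_ball hpt
        _ = 2 * (volume (ball c r)).toReal := by rw [setIntegral_const, smul_eq_mul, measureReal_def]; ring
        _ ≤ 9 * (volume (ball c r)).toReal := by nlinarith [Vpos c hr]
  · push_neg at hc
    refine ⟨gg (3*r), ?_, ?_⟩
    · set ρ := max ‖c‖ r with hρ
      have hρ1 : r ≤ ρ := le_max_right _ _
      have hρ2 : ρ ≤ 3*r := by
        apply max_le (by linarith) (by linarith)
      have C1 : gg (3*r) ≤ gg ρ := gg_anti (by linarith) hρ2
      have C2 : gg ρ ≤ gg r := gg_anti hr hρ1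
      have C3 : gg r - gg (3*r) ≤ Real.log ((3*r)/r) := gg_sub_le hr (by linarith)
      have : (3*r)/r = 3 := by field_simp
      rw [this] at C3
      have := log_three_le_two
      rw [abs_le]; constructor <;> linarith
    · have hsub : ball c r ⊆ ball (0:E2) (3*r) := by
        intro x hx
        obtain ⟨-, hu⟩ := norm_bounds hx
        rw [mem_ball, dist_zero_right]; linarith
      have h3r : 0 < 3*r := by linarith
      calc ∫ x in ball c r, |fLog x - gg (3*r)| ∂volume
          ≤ ∫ x in ball (0:E2) (3*r), |fLog x - gg (3*r)| ∂volume := by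
            apply setIntegral_mono_set
              ((int_fLog 0 (3*r)).sub ((integrableOn_const (C := gg (3*r))
                measure_ball_lt_top.ne))).abs
              (Filter.Eventually.of_forall fun x => abs_nonneg _)
              (HasSubset.Subset.eventuallyLE hsub)
        _ ≤ (volume (ball (0:E2) (3*r))).toReal := int_est h3r
        _ = 9 * (volume (ball c r)).toReal := vol_ratio hr

lemma avgEst (c : E2) {r : ℝ} (hr : 0 < r) :
    |avg fLog c r - gg (max ‖c‖ r)| ≤ 11 := by
  obtain ⟨a, ha1, ha2⟩ := est_case c hr
  have h1 : |avg fLog c r - a| ≤ 9 := abs_avg_sub_le hr (by linarith [ha2])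
  calc |avg fLog c r - gg (max ‖c‖ r)|
      ≤ |avg fLog c r - a| + |a - gg (max ‖c‖ r)| := abs_sub_le _ _ _
    _ ≤ 11 := by linarith

lemma bmoEach (c : E2) {r : ℝ} (hr : 0 < r) :
    ⨍ x in ball c r, |fLog x - avg fLog c r| ≤ 20 := by
  obtain ⟨a, ha1, ha2⟩ := est_case c hr
  set V := (volume (ball c r)).toReal with hV
  have hVpos : 0 < V := Vpos c hr
  have h1 : |avg fLog c r - a| ≤ 9 := abs_avg_sub_le hr ha2
  have hint1 : IntegrableOn (fun x => |fLog x - a|) (ball c r) volume :=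
    ((int_fLog c r).sub ((integrableOn_const (C := a) measure_ball_lt_top.ne))).abs
  have hint2 : IntegrableOn (fun x => |fLog x - avg fLog c r|) (ball c r) volume :=
    ((int_fLog c r).sub ((integrableOn_const (C := avg fLog c r)
      measure_ball_lt_top.ne))).abs
  have hmono : ∫ x in ball c r, |fLog x - avg fLog c r| ∂volume
      ≤ ∫ x in ball c r, (|fLog x - a| + 9) ∂volume := by
    apply setIntegral_mono_on hint2
      (hint1.add ((integrableOn_const (C := (9:ℝ)) measure_ball_lt_top.ne)))
      measurableSet_ball
    intro x _
    calc |fLog x - avg fLog c r| ≤ |fLog x - a| + |a - avg fLog c r| := abs_sub_le _ _ _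
      _ ≤ |fLog x - a| + 9 := by
          have h1' : |a - avg fLog c r| ≤ 9 := by rw [abs_sub_comm]; exact h1
          linarith
  have hsum : ∫ x in ball c r, (|fLog x - a| + 9) ∂volume
      = (∫ x in ball c r, |fLog x - a| ∂volume) + 9 * V := by
    rw [integral_add hint1 ((integrableOn_const (C := (9:ℝ)) measure_ball_lt_top.ne)),
      setIntegral_const, smul_eq_mul, measureReal_def]
    ring
  rw [setAverage_eq, smul_eq_mul, measureReal_def]
  calc V⁻¹ * ∫ x in ball c r, |fLog x - avg fLog c r| ∂volume
      ≤ V⁻¹ * (18 * V) := by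
        apply mul_le_mul_of_nonneg_left ?_ (by positivity)
        rw [hsum] at hmono; linarith
    _ = 18 := by field_simp
    _ ≤ 20 := by norm_num


lemma dist_of_subset {x₁ x₂ : E2} {r₁ r₂ : ℝ} (hr₂ : 0 < r₂)
    (h : ball x₂ (2*r₂) ⊆ ball x₁ r₁) : dist x₂ x₁ + 2*r₂ ≤ r₁ := by
  classical
  by_contra hlt
  push_neg at hlt
  set d := dist x₂ x₁ with hd
  have hd0 : 0 ≤ d := dist_nonneg
  set δ := min r₂ ((d + 2*r₂ - r₁)/2) with hδdef
  have hδpos : 0 < δ := lt_min hr₂ (by linarith)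
  have hδle : δ ≤ (d + 2*r₂ - r₁)/2 := min_le_right _ _
  set s := 2*r₂ - δ with hs
  have hs0 : 0 ≤ s := by
    have : δ ≤ r₂ := min_le_left _ _
    simp only [hs]; linarith
  have hslt : s < 2*r₂ := by simp only [hs]; linarith
  set v : E2 := if x₂ = x₁ then (EuclideanSpace.single 0 1 : E2)
    else ‖x₂ - x₁‖⁻¹ • (x₂ - x₁) with hv
  have hnv : ‖v‖ = 1 := by
    rw [hv]
    split_ifs with he
    · rw [EuclideanSpace.norm_single]; norm_num
    · have hne : x₂ - x₁ ≠ 0 := sub_ne_zero.mpr he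
      rw [norm_smul, norm_inv, norm_norm, inv_mul_cancel₀ (norm_ne_zero_iff.mpr hne)]
  set y := x₂ + s • v with hy
  have hymem : y ∈ ball x₂ (2*r₂) := by
    rw [mem_ball, hy, dist_eq_norm, add_sub_cancel_left, norm_smul, hnv, Real.norm_eq_abs,
      abs_of_nonneg hs0, mul_one]
    exact hslt
  have hkey : dist y x₁ = d + s := by
    rw [hy, dist_eq_norm]
    by_cases he : x₂ = x₁
    · subst he
      rw [add_sub_cancel_left, norm_smul, hnv, Real.norm_eq_abs, abs_of_nonneg hs0, mul_one]
      simp [hd]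
    · have hne : x₂ - x₁ ≠ 0 := sub_ne_zero.mpr he
      have hn : 0 < ‖x₂ - x₁‖ := norm_pos_iff.mpr hne
      rw [hv, if_neg he]
      have : x₂ + s • (‖x₂ - x₁‖⁻¹ • (x₂ - x₁)) - x₁
          = (1 + s * ‖x₂ - x₁‖⁻¹) • (x₂ - x₁) := by
        rw [smul_smul, add_smul, one_smul]
        abel
      rw [this, norm_smul, Real.norm_eq_abs, abs_of_nonneg (by positivity)]
      rw [hd, dist_eq_norm]
      field_simp
  have := h hymem
  rw [mem_ball, hkey] at this
  simp only [hs] at this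
  linarith


lemma log_two_le_one : Real.log 2 ≤ 1 := by
  have := Real.log_le_sub_one_of_pos (by norm_num : (0:ℝ) < 2); linarith

lemma ggPair {x₁ x₂ : E2} {r₁ r₂ : ℝ} (hr₂ : 0 < r₂) (hr₁ : 0 < r₁) (h1 : r₁ ≤ 1)
    (hd : dist x₂ x₁ + 2*r₂ ≤ r₁) :
    |gg (max ‖x₂‖ r₂) - gg (max ‖x₁‖ r₁)|
      ≤ 1 + Real.log ((1 - Real.log r₂) / (1 - Real.log r₁)) := by
  have hd0 : 0 ≤ dist x₂ x₁ := dist_nonneg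
  have hr21 : r₂ ≤ r₁/2 := by linarith
  have hn2 : ‖x₂‖ ≤ ‖x₁‖ + r₁ := by
    have h := norm_sub_norm_le x₂ x₁
    rw [← dist_eq_norm] at h
    linarith
  have hn2' : ‖x₁‖ - r₁ ≤ ‖x₂‖ := by
    have h := norm_sub_norm_le x₁ x₂
    rw [← dist_eq_norm, dist_comm] at h
    linarith
  set ρ₂ := max ‖x₂‖ r₂ with hρ₂
  set ρ₁ := max ‖x₁‖ r₁ with hρ₁
  have hρ₂pos : 0 < ρ₂ := lt_of_lt_of_le hr₂ (le_max_right _ _)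
  have hρ₁pos : 0 < ρ₁ := lt_of_lt_of_le hr₁ (le_max_right _ _)
  set L := Real.log ((1 - Real.log r₂) / (1 - Real.log r₁)) with hLdef
  have hpos₁ : 0 < 1 - Real.log r₁ := one_sub_log_pos hr₁ h1
  have hpos₂ : 0 < 1 - Real.log r₂ := one_sub_log_pos hr₂ (by linarith)
  have hL : 0 ≤ L := by
    apply Real.log_nonneg
    rw [le_div_iff₀ hpos₁]
    have := Real.log_le_log hr₂ (by linarith : r₂ ≤ r₁)
    linarith
  -- part (a)
  have ha : gg ρ₁ - gg ρ₂ ≤ 1 := by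
    have hle : ρ₂ ≤ 2*ρ₁ := by
      apply max_le
      · calc ‖x₂‖ ≤ ‖x₁‖ + r₁ := hn2
          _ ≤ ρ₁ + ρ₁ := add_le_add (le_max_left _ _) (le_max_right _ _)
          _ = 2*ρ₁ := by ring
      · calc r₂ ≤ r₁ := by linarith
          _ ≤ ρ₁ := le_max_right _ _
          _ ≤ 2*ρ₁ := by linarith
    have h2 : gg (2*ρ₁) ≤ gg ρ₂ := gg_anti hρ₂pos hle
    have h3 : gg ρ₁ - gg (2*ρ₁) ≤ Real.log ((2*ρ₁)/ρ₁) := gg_sub_le hρ₁pos (by linarith)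
    have h4 : (2*ρ₁)/ρ₁ = 2 := by field_simp
    rw [h4] at h3
    linarith [log_two_le_one]
  -- part (b)
  have hb : gg ρ₂ - gg ρ₁ ≤ 1 + L := by
    by_cases hc : 2*r₁ ≤ ‖x₁‖
    · have hρ₁eq : ρ₁ = ‖x₁‖ := max_eq_left (by linarith)
      have hhalf : ρ₁/2 ≤ ρ₂ := by
        rw [hρ₁eq]
        calc ‖x₁‖/2 ≤ ‖x₁‖ - r₁ := by linarith
          _ ≤ ‖x₂‖ := hn2'
          _ ≤ ρ₂ := le_max_left _ _
      have h2 : gg ρ₂ ≤ gg (ρ₁/2) := gg_anti (by linarith) hhalf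
      have h3 : gg (ρ₁/2) - gg ρ₁ ≤ Real.log (ρ₁/(ρ₁/2)) := gg_sub_le (by linarith) (by linarith)
      have h4 : ρ₁/(ρ₁/2) = 2 := by
        field_simp
      rw [h4] at h3
      linarith [log_two_le_one]
    · push_neg at hc
      have hρ₁le : ρ₁ ≤ 2*r₁ := max_le (by linarith) (by linarith)
      have h2 : gg (2*r₁) ≤ gg ρ₁ := gg_anti hρ₁pos hρ₁le
      have h3 : gg r₁ - gg (2*r₁) ≤ Real.log ((2*r₁)/r₁) := gg_sub_le hr₁ (by linarith)
      have h4 : (2*r₁)/r₁ = 2 := by field_simp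
      rw [h4] at h3
      have h5 : gg ρ₂ ≤ gg r₂ := gg_anti hr₂ (le_max_right _ _)
      have h6 : gg r₂ - gg r₁ = L := by
        unfold gg
        rw [if_pos (by linarith : r₂ ≤ 1), if_pos h1, hLdef,
          Real.log_div hpos₂.ne' hpos₁.ne']
      linarith [log_two_le_one]
  rw [abs_le]
  constructor <;> linarith

lemma pair_bound {x₁ x₂ : E2} {r₁ r₂ : ℝ} (hr₂ : 0 < r₂) (hr₁ : 0 < r₁) (h1 : r₁ ≤ 1)
    (hd : dist x₂ x₁ + 2*r₂ ≤ r₁) :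
    |avg fLog x₂ r₂ - avg fLog x₁ r₁| /
      (1 + Real.log ((1 - Real.log r₂) / (1 - Real.log r₁))) ≤ 23 := by
  set L := Real.log ((1 - Real.log r₂) / (1 - Real.log r₁)) with hLdef
  have hpos₁ : 0 < 1 - Real.log r₁ := one_sub_log_pos hr₁ h1
  have hL : 0 ≤ L := by
    apply Real.log_nonneg
    rw [le_div_iff₀ hpos₁]
    have := Real.log_le_log hr₂ (by linarith [dist_nonneg (x := x₂) (y := x₁)] : r₂ ≤ r₁)
    linarith
  have hN : |avg fLog x₂ r₂ - avg fLog x₁ r₁| ≤ 23 + L := by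
    have e1 := avgEst x₂ hr₂
    have e2 := avgEst x₁ hr₁
    have e3 := ggPair hr₂ hr₁ h1 hd
    calc |avg fLog x₂ r₂ - avg fLog x₁ r₁|
        ≤ |avg fLog x₂ r₂ - gg (max ‖x₂‖ r₂)| + |gg (max ‖x₂‖ r₂) - avg fLog x₁ r₁| :=
          abs_sub_le _ _ _
      _ ≤ |avg fLog x₂ r₂ - gg (max ‖x₂‖ r₂)| + (|gg (max ‖x₂‖ r₂) - gg (max ‖x₁‖ r₁)|
            + |gg (max ‖x₁‖ r₁) - avg fLog x₁ r₁|) := by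
          have := abs_sub_le (gg (max ‖x₂‖ r₂)) (gg (max ‖x₁‖ r₁)) (avg fLog x₁ r₁)
          linarith
      _ ≤ 11 + ((1 + L) + 11) := by
          have e2' : |gg (max ‖x₁‖ r₁) - avg fLog x₁ r₁| ≤ 11 := by
            rw [abs_sub_comm]; exact e2
          linarith
      _ = 23 + L := by ring
  rw [div_le_iff₀ (by linarith : (0:ℝ) < 1 + L)]
  nlinarith

lemma not_memLp_top : ¬ MemLp fLog ⊤ (volume : Measure E2) := by
  rintro ⟨hm, hlt⟩
  rw [eLpNorm_exponent_top] at hlt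
  set C := (eLpNormEssSup fLog (volume : Measure E2)).toReal with hC
  have hCnn : 0 ≤ C := ENNReal.toReal_nonneg
  have hae : ∀ᵐ x ∂(volume : Measure E2), |fLog x| ≤ C := by
    filter_upwards [ae_le_eLpNormEssSup (f := fLog) (μ := (volume : Measure E2))] with x hx
    have := ENNReal.toReal_mono hlt.ne (by exact_mod_cast hx)
    simpa [Real.norm_eq_abs] using this
  set ε := Real.exp (-(Real.exp (C+1))) with hε
  have hεpos : 0 < ε := Real.exp_pos _
  have hε1 : ε ≤ 1 := Real.exp_le_one_iff.mpr (neg_nonpos_of_nonneg (Real.exp_pos _).le)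
  have hbig : ∀ x : E2, x ∈ ball 0 ε → x ≠ 0 → C < fLog x := by
    intro x hx hx0
    have hnx : 0 < ‖x‖ := norm_pos_iff.mpr hx0
    have hxε : ‖x‖ < ε := by simpa [dist_zero_right] using hx
    have hfx : fLog x = Real.log (1 - Real.log ‖x‖) := by
      unfold fLog
      rw [if_pos ⟨by linarith, hx0⟩]
    have hlogx : Real.log ‖x‖ < -(Real.exp (C+1)) := by
      calc Real.log ‖x‖ < Real.log ε := Real.log_lt_log hnx hxε
        _ = -(Real.exp (C+1)) := by rw [hε, Real.log_exp]
    have h2 : Real.exp (C+1) < 1 - Real.log ‖x‖ := by linarith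
    have h3 : C + 1 < Real.log (1 - Real.log ‖x‖) := by
      calc C + 1 = Real.log (Real.exp (C+1)) := (Real.log_exp _).symm
        _ < Real.log (1 - Real.log ‖x‖) := Real.log_lt_log (Real.exp_pos _) h2
    rw [hfx]; linarith
  have hsub : (ball (0:E2) ε \ {0}) ⊆ {x : E2 | ¬ |fLog x| ≤ C} := by
    rintro x ⟨hx, hx0⟩
    simp only [Set.mem_singleton_iff] at hx0
    have := hbig x hx hx0
    simp only [Set.mem_setOf_eq, not_le]
    calc C < fLog x := this
      _ ≤ |fLog x| := le_abs_self _
  have hnull : volume {x : E2 | ¬ |fLog x| ≤ C} = 0 := by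
    rw [← ae_iff] at *
    exact hae
  have h0 : volume (ball (0:E2) ε \ {0}) = 0 := measure_mono_null hsub hnull
  have hvol : volume (ball (0:E2) ε \ {0}) = volume (ball (0:E2) ε) :=
    measure_diff_null (measure_singleton 0)
  have := measure_ball_pos volume (0:E2) hεpos
  rw [hvol] at h0
  exact absurd h0 this.ne'


/-- `fLog` is not essentially bounded but has finite LBMO norm; in particular
the inclusion `L^∞ ⊆ LBMO` is strict. -/
theorem fLog_unbounded_but_lbmo :
    ¬ MemLp fLog ⊤ volume ∧ lbmoNorm fLog ≠ ⊤ := by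
  constructor
  · exact not_memLp_top
  · have hbmo : bmoNorm fLog ≤ ENNReal.ofReal 20 := by
      apply iSup_le; intro c; apply iSup_le; intro r; apply iSup_le; intro hr
      exact ENNReal.ofReal_le_ofReal (bmoEach c hr)
    have hsup : lbmoSup fLog ≤ ENNReal.ofReal 23 := by
      apply iSup_le; intro x₁; apply iSup_le; intro x₂; apply iSup_le; intro r₁
      apply iSup_le; intro r₂; apply iSup_le; intro hr₂; apply iSup_le; intro hr₁
      apply iSup_le; intro h1; apply iSup_le; intro hsub
      exact ENNReal.ofReal_le_ofReal (pair_bound hr₂ hr₁ h1 (dist_of_subset hr₂ hsub))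
    have hle : lbmoNorm fLog ≤ ENNReal.ofReal 20 + ENNReal.ofReal 23 :=
      add_le_add hbmo hsup
    exact ne_top_of_le_ne_top
      (ENNReal.add_ne_top.mpr ⟨ENNReal.ofReal_ne_top, ENNReal.ofReal_ne_top⟩) hle
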